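/- Let G be a finite simple graph, let D be a minimum dominating set in G, and let F be a maximal independent set within the induced subgraph G[D]. Let (d₁, …, dₙ) be any ordering of D ∖ F, and let (V₁, …, Vₙ) be the standard partition of V(G) ∖ (D ∪ N(F)) subject to this ordering. Then (V₁, …, Vₙ) has a partial ISR of size at least n/2 (i.e., a partial ISR R with 2|R| ≥ n). -/

import Mathlib

/-- `D` is a dominating set of `G`: every vertex lies in `D` or has a neighbor in `D`. -/
def IsDomSet {V : Type*} (G : SimpleGraph V) (D : Set V) : Prop :=
  ∀ v : V, v ∈ D ∨ ∃ u ∈ D, G.Adj u v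

/-- `S` is an independent set of `G`. -/
def IsIndep {V : Type*} (G : SimpleGraph V) (S : Set V) : Prop :=
  S.Pairwise fun u v => ¬ G.Adj u v

/-- The domination number of `G`: the minimum size of a dominating set. -/
noncomputable def gamma {V : Type*} (G : SimpleGraph V) : ℕ :=
  sInf {n | ∃ D : Set V, IsDomSet G D ∧ D.ncard = n}

/-- The independence number of `G`: the maximum size of an independent set. -/
noncomputable def alpha {V : Type*} (G : SimpleGraph V) : ℕ :=
  sSup {n | ∃ S : Set V, IsIndep G S ∧ S.ncard = n}

/-- The inverse domination number of `G`: the minimum size of a dominating set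
disjoint from some minimum dominating set. -/
noncomputable def invGamma {V : Type*} (G : SimpleGraph V) : ℕ :=
  sInf {n | ∃ D T : Set V, IsDomSet G D ∧ D.ncard = gamma G ∧
    IsDomSet G T ∧ D ∩ T = ∅ ∧ T.ncard = n}

/-- The independence number of the subgraph of `G` induced by `D`. -/
noncomputable def alphaOn {V : Type*} (G : SimpleGraph V) (D : Set V) : ℕ :=
  sSup {n | ∃ S : Set V, S ⊆ D ∧ IsIndep G S ∧ S.ncard = n}

/-- The number of edges of the subgraph of `G` induced by `D`. -/
noncomputable def edgeCountOn {V : Type*} (G : SimpleGraph V) (D : Set V) : ℕ :=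
  {e ∈ G.edgeSet | ∀ v ∈ e, v ∈ D}.ncard

/-- `D` is an optimal dominating set: of minimum size; among those, `G[D]` has
maximum independence number; and subject to that, `G[D]` has fewest edges. -/
def IsOptimalDomSet {V : Type*} (G : SimpleGraph V) (D : Set V) : Prop :=
  IsDomSet G D ∧ D.ncard = gamma G ∧
  (∀ D' : Set V, IsDomSet G D' → D'.ncard = gamma G → alphaOn G D' ≤ alphaOn G D) ∧
  (∀ D' : Set V, IsDomSet G D' → D'.ncard = gamma G →
    alphaOn G D' = alphaOn G D → edgeCountOn G D ≤ edgeCountOn G D')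

/-- `w` is a private neighbor of `v` with respect to `D`: `w ∉ D` and `N(w) ∩ D = {v}`. -/
def IsPrivateNbr {V : Type*} (G : SimpleGraph V) (D : Set V) (v w : V) : Prop :=
  w ∉ D ∧ G.Adj v w ∧ ∀ u ∈ D, G.Adj u w → u = v

/-- `R` is a partial independent set of representatives (partial ISR) for the family `P`:
an independent set consisting of distinct representatives of some subfamily of `P`. -/
def IsPartialISR {V : Type*} (G : SimpleGraph V) {n : ℕ} (P : Fin n → Set V)
    (R : Set V) : Prop :=
  IsIndep G R ∧ ∃ (J : Set (Fin n)) (x : Fin n → V),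
    Set.InjOn x J ∧ (∀ j ∈ J, x j ∈ P j) ∧ R = x '' J

/-- `b(G)`: the largest number of vertices of an induced bipartite subgraph of `G`. -/
noncomputable def bipNum {V : Type*} (G : SimpleGraph V) : ℕ :=
  sSup {n | ∃ B A : Set V, A ⊆ B ∧ IsIndep G A ∧ IsIndep G (B \ A) ∧ B.ncard = n}

theorem partial_isr_half {V : Type*} [Fintype V] (G : SimpleGraph V)
    (D : Set V) (hDdom : IsDomSet G D) (hDmin : D.ncard = gamma G)
    (F : Set V) (hFD : F ⊆ D) (hFind : IsIndep G F)
    (hFmax : ∀ v ∈ D, v ∉ F → ∃ u ∈ F, G.Adj u v)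
    {n : ℕ} (d : Fin n → V) (hd_inj : Function.Injective d)
    (hd_range : Set.range d = D \ F)
    (Vpart : Fin n → Set V)
    (hVpart : ∀ i : Fin n, Vpart i =
      {w | w ∈ Set.univ \ (D ∪ {x | ∃ u ∈ F, G.Adj u x}) ∧ G.Adj (d i) w}
        \ ⋃ j < i, Vpart j) :
    ∃ R : Set V, IsPartialISR G Vpart R ∧ n ≤ 2 * R.ncard := by
  classical
  set Y : Set V := Set.univ \ (D ∪ {x | ∃ u ∈ F, G.Adj u x}) with hY
  have hVsub : ∀ i, Vpart i ⊆ {w | w ∈ Y ∧ G.Adj (d i) w} := by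
    intro i
    rw [hVpart i]
    exact Set.diff_subset
  have hVmem : ∀ (v : V) (j : Fin n), v ∈ Y → G.Adj (d j) v →
      (∀ k, k < j → ¬ G.Adj (d k) v) → v ∈ Vpart j := by
    intro v j hvY hadj hmin
    rw [hVpart j]
    refine ⟨⟨hvY, hadj⟩, ?_⟩
    simp only [Set.mem_iUnion, not_exists]
    intro k hk hvk
    exact hmin k hk (hVsub k hvk).2
  have hdD : ∀ i, d i ∈ D \ F := by
    intro i
    rw [← hd_range]
    exact ⟨i, rfl⟩
  -- choose a maximum partial ISR
  have hempty : IsPartialISR G Vpart ∅ := by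
    refine ⟨Set.pairwise_empty _, ∅, d, ?_, ?_, ?_⟩ <;> simp [Set.InjOn]
  obtain ⟨R, hR, hRmax⟩ := Set.Finite.exists_maximalFor Set.ncard
    {R : Set V | IsPartialISR G Vpart R} (Set.toFinite _) ⟨∅, hempty⟩
  obtain ⟨hRind, J, x, hxinj, hxmem, hRx⟩ := hR
  have hRY : R ⊆ Y := by
    intro r hr
    rw [hRx] at hr
    obtain ⟨j, hj, rfl⟩ := hr
    exact (hVsub j (hxmem j hj)).1
  have hRD : ∀ r ∈ R, r ∉ D := by
    intro r hr hrD
    exact (hRY hr).2 (Or.inl hrD)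
  -- maximality: any representative of an unused part has a neighbor in R
  have hext : ∀ (v : V) (j : Fin n), j ∉ J → v ∈ Vpart j → v ∉ R →
      ∃ r ∈ R, G.Adj r v := by
    intro v j hjJ hvV hvR
    by_contra h
    push_neg at h
    set x' : Fin n → V := fun k => if k = j then v else x k with hx'
    have hx'J : ∀ k ∈ J, x' k = x k := by
      intro k hk
      simp only [hx']
      rw [if_neg]
      rintro rfl
      exact hjJ hk
    have himg : x' '' J = R := by
      rw [hRx]
      exact Set.image_congr hx'J
    have hnew : IsPartialISR G Vpart (insert v R) := by
      constructor
      · refine (@Set.pairwise_insert_of_symm _ _ _ _ ⟨?_⟩).2 ⟨hRind, ?_⟩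
        · intro a b hab hba
          exact hab hba.symm
        · intro b hb _
          intro hadj
          exact h b hb hadj.symm
      · refine ⟨insert j J, x', ?_, ?_, ?_⟩
        · intro a ha b hb he
          rcases Set.mem_insert_iff.1 ha with rfl | haJ <;>
            rcases Set.mem_insert_iff.1 hb with rfl | hbJ
          · rfl
          · exfalso
            rw [hx'J b hbJ] at he
            simp only [hx', if_pos rfl] at he
            exact hvR (by rw [hRx]; exact ⟨b, hbJ, he.symm⟩)
          · exfalso
            rw [hx'J a haJ] at he
            simp only [hx', if_pos rfl] at he
            exact hvR (by rw [hRx]; exact ⟨a, haJ, he⟩)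
          · rw [hx'J a haJ, hx'J b hbJ] at he
            exact hxinj haJ hbJ he
        · intro k hk
          rcases Set.mem_insert_iff.1 hk with rfl | hkJ
          · simpa only [hx', if_pos rfl] using hvV
          · rw [hx'J k hkJ]
            exact hxmem k hkJ
        · rw [Set.image_insert_eq, himg]
          simp [hx']
    have hle : R.ncard ≤ (insert v R).ncard :=
      Set.ncard_le_ncard (Set.subset_insert _ _) (Set.toFinite _)
    have heq := hRmax hnew hle
    rw [Set.ncard_insert_of_notMem hvR (Set.toFinite _)] at heq
    omega
  -- the swapped dominating set
  set S : Set V := d '' Jᶜ with hS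
  set D' : Set V := (D \ S) ∪ R with hD'
  have hSD : S ⊆ D \ F := by
    rintro _ ⟨i, _, rfl⟩
    exact hdD i
  have hFD' : F ⊆ D' := by
    intro u hu
    exact Or.inl ⟨hFD hu, fun hus => (hSD hus).2 hu⟩
  have hdom : IsDomSet G D' := by
    intro v
    by_cases hvD' : v ∈ D'
    · exact Or.inl hvD'
    right
    by_cases hvD : v ∈ D
    · have hvS : v ∈ S := by
        by_contra hvS
        exact hvD' (Or.inl ⟨hvD, hvS⟩)
      obtain ⟨u, hu, hadj⟩ := hFmax v hvD (hSD hvS).2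
      exact ⟨u, hFD' hu, hadj⟩
    · by_cases hex : ∃ u ∈ D \ S, G.Adj u v
      · obtain ⟨u, hu, hadj⟩ := hex
        exact ⟨u, Or.inl hu, hadj⟩
      push_neg at hex
      have hallS : ∀ u ∈ D, G.Adj u v → u ∈ S := by
        intro u hu hadj
        by_contra hus
        exact hex u ⟨hu, hus⟩ hadj
      have hvY : v ∈ Y := by
        refine ⟨Set.mem_univ v, ?_⟩
        rintro (h1 | ⟨u, hu, hadj⟩)
        · exact hvD h1
        · exact (hSD (hallS u (hFD hu) hadj)).2 hu
      obtain ⟨u₀, hu₀, hadj₀⟩ := (hDdom v).resolve_left hvD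
      obtain ⟨i₀, _, rfl⟩ := hallS u₀ hu₀ hadj₀
      have hTne : {k : Fin n | G.Adj (d k) v}.Nonempty := ⟨i₀, hadj₀⟩
      obtain ⟨j, hjT, hjmin⟩ := Set.exists_min_image _ id (Set.toFinite _) hTne
      have hvV : v ∈ Vpart j := by
        refine hVmem v j hvY hjT ?_
        intro k hk hadjk
        exact absurd (hjmin k hadjk) (by simpa using hk.not_ge)
      have hjJ : j ∉ J := by
        have : d j ∈ S := hallS (d j) (hdD j).1 hjT
        obtain ⟨i, hi, he⟩ := this
        rwa [← hd_inj he]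
      have hvR : v ∉ R := fun h => hvD' (Or.inr h)
      obtain ⟨r, hr, hadj⟩ := hext v j hjJ hvV hvR
      exact ⟨r, Or.inr hr, hadj⟩
  -- counting
  have h1 : gamma G ≤ D'.ncard := by
    unfold gamma
    exact Nat.sInf_le ⟨D', hdom, rfl⟩
  have hdisj : Disjoint (D \ S) R := by
    rw [Set.disjoint_right]
    intro r hr hrD
    exact hRD r hr hrD.1
  have h2 : D'.ncard = (D \ S).ncard + R.ncard :=
    Set.ncard_union_eq hdisj (Set.toFinite _) (Set.toFinite _)
  have hSsubD : S ⊆ D := fun u hu => (hSD hu).1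
  have h3 : (D \ S).ncard = D.ncard - S.ncard := Set.ncard_diff hSsubD (Set.toFinite _)
  have hSle : S.ncard ≤ D.ncard := Set.ncard_le_ncard hSsubD (Set.toFinite _)
  have hScard : S.ncard = Jᶜ.ncard := Set.ncard_image_of_injOn hd_inj.injOn
  have hJn : J.ncard + Jᶜ.ncard = n := by
    rw [Set.ncard_add_ncard_compl]
    simp [Nat.card_eq_fintype_card]
  have hRJ : R.ncard = J.ncard := by
    rw [hRx]
    exact Set.ncard_image_of_injOn hxinj
  refine ⟨R, ⟨hRind, J, x, hxinj, hxmem, hRx⟩, ?_⟩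
  omega
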